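/- Let H be a Hilbert space, D a self-adjoint operator on H, and u a unitary with ‖[D, u]‖ ≤ L (commutator bounded). If ⟨D²f, f⟩ ≥ c²‖f‖² for all f in a core V preserved by u, then ⟨(uDu⁻¹)²f, f⟩ ≥ c²‖f‖² for all f ∈ V, and for D_t = tD + (1−t)uDu⁻¹: ⟨D_t²f, f⟩ ≥ (c² − L²/4)‖f‖² for all f ∈ V and t ∈ [0,1], where additionally ‖[D, u⁻¹]‖ ≤ L. -/

import Mathlib

open scoped InnerProductSpace

/-- if `D` is symmetric on a core `V` preserved by the unitary `u`, with
`⟨D²f,f⟩ ≥ c²‖f‖²` on `V`, and both commutators `[D,u]`, `[D,u⁻¹]` are bounded by `L`,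
then `⟨(uDu⁻¹)²f,f⟩ ≥ c²‖f‖²` on `V`, and for `D_t = tD + (1-t)uDu⁻¹`,
`⟨D_t²f,f⟩ ≥ (c² - L²/4)‖f‖²` on `V` for all `t ∈ [0,1]`. -/
theorem deformed_dirac_lower_bound {H : Type*} [NormedAddCommGroup H]
    [InnerProductSpace ℂ H] [CompleteSpace H]
    (D : H →ₗ[ℂ] H) (V : Submodule ℂ H) (u : H ≃ₗᵢ[ℂ] H) (c L : ℝ) (hL : 0 ≤ L)
    (hDV : ∀ v ∈ V, D v ∈ V) (huV : ∀ v ∈ V, u v ∈ V) (huV' : ∀ v ∈ V, u.symm v ∈ V)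
    (hsym : ∀ f ∈ V, ∀ g ∈ V, ⟪D f, g⟫_ℂ = ⟪f, D g⟫_ℂ)
    (hcomm : ∀ v, ‖D (u v) - u (D v)‖ ≤ L * ‖v‖)
    (hcomm' : ∀ v, ‖D (u.symm v) - u.symm (D v)‖ ≤ L * ‖v‖)
    (hD2 : ∀ f ∈ V, Complex.re (⟪D (D f), f⟫_ℂ) ≥ c ^ 2 * ‖f‖ ^ 2) :
    (∀ f ∈ V,
      Complex.re (⟪u (D (u.symm (u (D (u.symm f))))), f⟫_ℂ) ≥ c ^ 2 * ‖f‖ ^ 2) ∧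
    ∀ t ∈ Set.Icc (0 : ℝ) 1, ∀ f ∈ V,
      Complex.re (⟪(fun w => t • D w + (1 - t) • u (D (u.symm w)))
          ((fun w => t • D w + (1 - t) • u (D (u.symm w))) f), f⟫_ℂ) ≥
        (c ^ 2 - L ^ 2 / 4) * ‖f‖ ^ 2 := by
  have hu : ∀ p q : H, ⟪u p, q⟫_ℂ = ⟪p, u.symm q⟫_ℂ := by
    intro p q
    conv_lhs => rw [← u.apply_symm_apply q]
    exact u.inner_map_map p (u.symm q)
  have hu' : ∀ p q : H, ⟪p, u q⟫_ℂ = ⟪u.symm p, q⟫_ℂ := by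
    intro p q
    conv_lhs => rw [← u.apply_symm_apply p]
    exact u.inner_map_map (u.symm p) q
  have hsm : ∀ (r : ℝ) (x y : H), ⟪r • x, y⟫_ℂ = (r : ℂ) * ⟪x, y⟫_ℂ := by
    intro r x y
    rw [← algebraMap_smul ℂ r x, inner_smul_left]
    simp [Complex.conj_ofReal]
  -- E-symmetry
  have hEsym : ∀ x ∈ V, ∀ y ∈ V,
      ⟪u (D (u.symm x)), y⟫_ℂ = ⟪x, u (D (u.symm y))⟫_ℂ := by
    intro x hx y hy
    rw [hu, hsym _ (huV' x hx) _ (huV' y hy), ← hu']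
  have part1 : ∀ f ∈ V,
      Complex.re (⟪u (D (u.symm (u (D (u.symm f))))), f⟫_ℂ) ≥ c ^ 2 * ‖f‖ ^ 2 := by
    intro f hf
    rw [u.symm_apply_apply, hu]
    have := hD2 (u.symm f) (huV' f hf)
    rwa [u.symm.norm_map] at this
  refine ⟨part1, ?_⟩
  rintro t ⟨ht0, ht1⟩ f hf
  set g := u.symm f with hg
  set a := D f with ha
  set b := u (D g) with hb
  have haV : a ∈ V := hDV f hf
  have hgV : g ∈ V := huV' f hf
  have hbV : b ∈ V := huV _ (hDV _ hgV)
  have hTf : (fun w => t • D w + (1 - t) • u (D (u.symm w))) f = t • a + (1 - t) • b := by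
    simp [ha, hb, hg]
  have hTfV : t • a + (1 - t) • b ∈ V :=
    V.add_mem (V.smul_of_tower_mem t haV) (V.smul_of_tower_mem _ hbV)
  rw [hTf]
  show Complex.re (⟪t • D (t • a + (1 - t) • b) +
      (1 - t) • u (D (u.symm (t • a + (1 - t) • b))), f⟫_ℂ) ≥ _
  have e1 : ⟪D (t • a + (1 - t) • b), f⟫_ℂ = ⟪t • a + (1 - t) • b, a⟫_ℂ :=
    hsym _ hTfV f hf
  have e2 : ⟪u (D (u.symm (t • a + (1 - t) • b))), f⟫_ℂ
      = ⟪t • a + (1 - t) • b, b⟫_ℂ := hEsym _ hTfV f hf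
  rw [inner_add_left, hsm, hsm, e1, e2, inner_add_left, inner_add_left,
    hsm, hsm, hsm, hsm]
  set A := Complex.re ⟪a, a⟫_ℂ with hAdef
  set B := Complex.re ⟪b, b⟫_ℂ with hBdef
  set C := Complex.re ⟪a, b⟫_ℂ with hCdef
  have hC' : Complex.re ⟪b, a⟫_ℂ = C := by
    simpa [RCLike.re_to_complex] using inner_re_symm (𝕜 := ℂ) b a
  have hre : Complex.re (((t : ℝ) : ℂ) * (((t : ℝ) : ℂ) * ⟪a, a⟫_ℂ + ((1 - t : ℝ) : ℂ) * ⟪b, a⟫_ℂ) +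
      ((1 - t : ℝ) : ℂ) * (((t : ℝ) : ℂ) * ⟪a, b⟫_ℂ + ((1 - t : ℝ) : ℂ) * ⟪b, b⟫_ℂ)) =
      t * (t * A + (1 - t) * C) + (1 - t) * (t * C + (1 - t) * B) := by
    simp [Complex.add_re, Complex.mul_re, Complex.sub_re, Complex.sub_im,
      Complex.ofReal_re, Complex.ofReal_im, hC']
    rw [hAdef, hBdef, hCdef, inner_self_eq_norm_sq_to_K, inner_self_eq_norm_sq_to_K]
    rfl
  have hA' : A ≥ c ^ 2 * ‖f‖ ^ 2 := by
    have h := hD2 f hf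
    rwa [hsym _ haV f hf] at h
  have hAnorm : A = ‖a‖ ^ 2 := by
    rw [hAdef, ← Complex.ofReal_re (‖a‖ ^ 2)]
    congr 1
    exact_mod_cast inner_self_eq_norm_sq_to_K (𝕜 := ℂ) a
  have hBnorm : B = ‖b‖ ^ 2 := by
    rw [hBdef, ← Complex.ofReal_re (‖b‖ ^ 2)]
    congr 1
    exact_mod_cast inner_self_eq_norm_sq_to_K (𝕜 := ℂ) b
  have hB' : B ≥ c ^ 2 * ‖f‖ ^ 2 := by
    have h := hD2 g hgV
    rw [hsym _ (hDV g hgV) g hgV] at h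
    have h1 : Complex.re ⟪D g, D g⟫_ℂ = ‖D g‖ ^ 2 := by
      rw [← Complex.ofReal_re (‖D g‖ ^ 2)]
      congr 1
      exact_mod_cast inner_self_eq_norm_sq_to_K (𝕜 := ℂ) (D g)
    rw [h1] at h
    rw [hBnorm, hb, u.norm_map]
    calc ‖D g‖ ^ 2 ≥ c ^ 2 * ‖g‖ ^ 2 := h
    _ = c ^ 2 * ‖f‖ ^ 2 := by rw [hg, u.symm.norm_map]
  have hSle : ‖a - b‖ ≤ L * ‖f‖ := by
    have h := hcomm g
    rw [hg, u.apply_symm_apply] at h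
    calc ‖a - b‖ = ‖D (u g) - u (D g)‖ := by rw [ha, hb, hg, u.apply_symm_apply]
    _ ≤ L * ‖g‖ := hcomm g
    _ = L * ‖f‖ := by rw [hg, u.symm.norm_map]
  have hSsq : ‖a - b‖ ^ 2 = A - 2 * C + B := by
    rw [hAnorm, hBnorm, hCdef]
    have := @norm_sub_sq ℂ H _ _ _ a b
    simpa [RCLike.re_to_complex] using this
  have hS2le : ‖a - b‖ ^ 2 ≤ (L * ‖f‖) ^ 2 := by
    nlinarith [norm_nonneg (a - b), hSle]
  rw [hre]
  nlinarith [sq_nonneg (1 - 2 * t), sq_nonneg ‖a - b‖, sq_nonneg (L * ‖f‖),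
    mul_nonneg ht0 (by linarith : (0:ℝ) ≤ 1 - t),
    mul_nonneg (mul_nonneg ht0 (by linarith : (0:ℝ) ≤ 1 - t))
      (by linarith [hS2le, hSsq] : (0:ℝ) ≤ (L * ‖f‖) ^ 2 - ‖a - b‖ ^ 2),
    mul_nonneg ht0 (by linarith : (0:ℝ) ≤ A - c ^ 2 * ‖f‖ ^ 2),
    mul_nonneg (by linarith : (0:ℝ) ≤ 1 - t) (by linarith : (0:ℝ) ≤ B - c ^ 2 * ‖f‖ ^ 2),
    hSsq]
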